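/- Let (X,Y) be a pair of real-valued random variables whose joint distribution is discrete with probability mass function h(x,y) = Pr(X = x, Y = y). For x with Pr(X = x) > 0, let K(x,·) denote the conditional distribution of Y given X = x, i.e. K(x,B) = Pr(Y ∈ B, X = x)/Pr(X = x). Then the following are equivalent: (i) for arbitrary real numbers x1 < x2 with Pr(X = x1) > 0 and Pr(X = x2) > 0, K(x1,·) ≤_lr K(x2,·); (ii) h is totally positive of order two, i.e. h(x2,y1)·h(x1,y2) ≤ h(x1,y1)·h(x2,y2) for all x1 < x2 and y1 < y2. -/

import Mathlib

open MeasureTheory Set Filter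
open scoped ENNReal

noncomputable section

/-- `g` is a (measurable, nonnegative) density of `Q` with respect to `μ`,
i.e. `Q B = ∫_B g dμ` for all Borel sets `B`. -/
def IsDensity (Q μ : Measure ℝ) (g : ℝ → ENNReal) : Prop :=
  Measurable g ∧ ∀ B : Set ℝ, MeasurableSet B → Q B = ∫⁻ x in B, g x ∂μ

/-- Likelihood ratio order `Q1 ≤_lr Q2`: there exist a σ-finite measure `μ` and densities
`g1 = dQ1/dμ`, `g2 = dQ2/dμ` such that the ratio `g2/g1` (with values in `[0,∞]`)
is nondecreasing on the set `{g1 + g2 > 0}`. -/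
def LikelihoodRatioLE (Q1 Q2 : Measure ℝ) : Prop :=
  ∃ (μ : Measure ℝ) (g1 g2 : ℝ → ENNReal), SigmaFinite μ ∧
    IsDensity Q1 μ g1 ∧ IsDensity Q2 μ g2 ∧
    ∀ x y : ℝ, x ≤ y → 0 < g1 x + g2 x → 0 < g1 y + g2 y →
      g2 x / g1 x ≤ g2 y / g1 y

/-- The conditional distribution of `Y` given `X = x`,
i.e. the measure `B ↦ R({x} × B) / R({x} × ℝ)`. -/
def condDist (R : Measure (ℝ × ℝ)) (x : ℝ) : Measure ℝ :=
  (R ({x} ×ˢ (univ : Set ℝ)))⁻¹ • (R.restrict ({x} ×ˢ (univ : Set ℝ))).map Prod.snd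

lemma condDist_apply (R : Measure (ℝ × ℝ)) (x : ℝ) {B : Set ℝ} (hB : MeasurableSet B) :
    condDist R x B = (R ({x} ×ˢ (univ : Set ℝ)))⁻¹ * R ({x} ×ˢ B) := by
  rw [condDist, Measure.smul_apply, Measure.map_apply measurable_snd hB,
    Measure.restrict_apply (measurable_snd hB), smul_eq_mul]
  have : Prod.snd ⁻¹' B ∩ {x} ×ˢ (univ : Set ℝ) = {x} ×ˢ B := by
    ext p
    simp only [mem_inter_iff, mem_preimage, mem_prod, mem_singleton_iff, mem_univ, and_true]
    tauto
  rw [this]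

lemma condDist_singleton (R : Measure (ℝ × ℝ)) (x y : ℝ) :
    condDist R x {y} = (R ({x} ×ˢ (univ : Set ℝ)))⁻¹ * R {(x, y)} := by
  rw [condDist_apply R x (measurableSet_singleton y), Set.singleton_prod_singleton]

lemma measure_ctble (μ : Measure ℝ) {s : Set ℝ} (hs : s.Countable) :
    μ s = ∑' y : s, μ {(y : ℝ)} := by
  conv_lhs => rw [← biUnion_of_singleton s]
  exact measure_biUnion hs (fun a _ b _ hab => by simpa using hab)
    (fun b _ => measurableSet_singleton b)

lemma measurable_of_ctble_support (f : ℝ → ENNReal) {T : Set ℝ} (hT : T.Countable)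
    (h0 : ∀ y ∉ T, f y = 0) : Measurable f := by
  intro t ht
  by_cases h : (0 : ENNReal) ∈ t
  · have : f ⁻¹' t = (T ∩ f ⁻¹' t) ∪ Tᶜ := by
      ext y
      by_cases hy : y ∈ T <;> simp [hy, h0, h]
    rw [this]
    exact ((hT.mono inter_subset_left).measurableSet).union hT.measurableSet.compl
  · have : f ⁻¹' t = T ∩ f ⁻¹' t := by
      ext y
      by_cases hy : y ∈ T <;> simp [hy, h0, h]
    rw [this]
    exact (hT.mono inter_subset_left).measurableSet

lemma div_le_div_of_mul_le' {a b c d : ℝ≥0∞} (hb : b ≠ ∞) (hd : d ≠ ∞) (hc : c ≠ ∞)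
    (hne : d = 0 → c ≠ 0) (h : a * d ≤ c * b) : a / b ≤ c / d := by
  by_cases hd0 : d = 0
  · rw [hd0, ENNReal.div_zero (hne hd0)]; exact le_top
  · rw [ENNReal.le_div_iff_mul_le (Or.inl hd0) (Or.inl hd), div_eq_mul_inv, mul_right_comm,
      ← div_eq_mul_inv]
    exact (ENNReal.div_le_iff_le_mul (Or.inr hc) (Or.inl hb)).2 h

lemma mul_le_of_div_le_div' {a b c d : ℝ≥0∞} (hb : b ≠ ∞) (hd : d ≠ ∞) (hc : c ≠ ∞)
    (hab : b = 0 → a ≠ 0) (h : a / b ≤ c / d) : a * d ≤ c * b := by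
  by_cases hd0 : d = 0
  · simp [hd0]
  by_cases hb0 : b = 0
  · exfalso
    rw [hb0, ENNReal.div_zero (hab hb0)] at h
    rcases ENNReal.div_eq_top.1 (top_le_iff.1 h) with ⟨_, h2⟩ | ⟨h1, _⟩
    · exact hd0 h2
    · exact hc h1
  · rw [ENNReal.le_div_iff_mul_le (Or.inl hd0) (Or.inl hd), div_eq_mul_inv, mul_right_comm,
      ← div_eq_mul_inv] at h
    exact (ENNReal.div_le_iff_le_mul (Or.inl hb0) (Or.inl hb)).1 h

lemma div_div_div_cancel' {a b : ℝ≥0∞} (m : ℝ≥0∞) (hm : m ≠ 0) (hm' : m ≠ ∞) :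
    (a / m) / (b / m) = a / b := by
  simp only [div_eq_mul_inv]
  rw [ENNReal.mul_inv (Or.inr (ENNReal.inv_ne_top.2 hm))
    (Or.inr (ENNReal.inv_ne_zero.2 hm')), inv_inv, mul_assoc, mul_comm m⁻¹,
    mul_assoc, ENNReal.mul_inv_cancel hm hm', mul_one]

lemma isDensity_div (Q μ : Measure ℝ) {T : Set ℝ} (hT : T.Countable) (hQT : Q Tᶜ = 0)
    (hle : ∀ y, Q {y} ≤ μ {y}) (hfin : ∀ y, μ {y} ≠ ∞) :
    IsDensity Q μ (fun y => Q {y} / μ {y}) := by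
  have hQ0 : ∀ y ∉ T, Q {y} = 0 := fun y hy =>
    measure_mono_null (singleton_subset_iff.2 hy) hQT
  constructor
  · exact measurable_of_ctble_support _ hT (fun y hy => by simp [hQ0 y hy])
  · intro B hB
    have hTm : MeasurableSet T := hT.measurableSet
    have h1 : Q B = Q (B ∩ T) := by
      have h0 : Q (B \ T) = 0 := measure_mono_null (fun y hy => hy.2) hQT
      rw [← measure_inter_add_diff B hTm, h0, add_zero]
    have h2 : ∫⁻ y in B, Q {y} / μ {y} ∂μ = ∫⁻ y in B ∩ T, Q {y} / μ {y} ∂μ := by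
      rw [← lintegral_inter_add_diff (fun y => Q {y} / μ {y}) B hTm]
      have hz : ∫⁻ y in B \ T, Q {y} / μ {y} ∂μ = 0 := by
        rw [setLIntegral_congr_fun (hB.diff hTm)
          ((fun y (hy : y ∈ B \ T) => by simp [hQ0 y hy.2]) :
            EqOn (fun y => Q {y} / μ {y}) (fun _ => (0 : ℝ≥0∞)) (B \ T))]
        simp
      rw [hz, add_zero]
    rw [h1, h2, measure_ctble Q (hT.mono inter_subset_right),
      lintegral_countable _ (hT.mono inter_subset_right)]
    refine tsum_congr fun y => ?_
    by_cases hm : μ {(y : ℝ)} = 0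
    · have hq : Q {(y : ℝ)} = 0 := le_antisymm (hm ▸ hle (y : ℝ)) zero_le
      simp [hq, hm]
    · rw [ENNReal.div_mul_cancel hm (hfin _)]

theorem stmt_15 (R : Measure (ℝ × ℝ)) [IsProbabilityMeasure R]
    (hdisc : ∃ S : Set (ℝ × ℝ), S.Countable ∧ R Sᶜ = 0) :
    (∀ x1 x2 : ℝ, x1 < x2 →
      0 < R ({x1} ×ˢ (univ : Set ℝ)) → 0 < R ({x2} ×ˢ (univ : Set ℝ)) →
      LikelihoodRatioLE (condDist R x1) (condDist R x2)) ↔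
    (∀ x1 x2 y1 y2 : ℝ, x1 < x2 → y1 < y2 →
      R {(x2, y1)} * R {(x1, y2)} ≤ R {(x1, y1)} * R {(x2, y2)}) := by
  obtain ⟨S, hS, hRS⟩ := hdisc
  have hT : (Prod.snd '' S).Countable := hS.image _
  set T : Set ℝ := Prod.snd '' S with hTdef
  have hsub : ∀ x y : ℝ, R {(x, y)} ≤ R ({x} ×ˢ (univ : Set ℝ)) := fun x y =>
    measure_mono (by rw [← Set.singleton_prod_singleton]; exact Set.prod_mono_right (subset_univ _))
  constructor
  · -- LR order implies TP2
    intro hlr x1 x2 y1 y2 hx hy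
    by_cases h1 : R ({x1} ×ˢ (univ : Set ℝ)) = 0
    · have : R {(x1, y2)} = 0 := le_antisymm (h1 ▸ hsub x1 y2) zero_le
      simp [this]
    by_cases h2 : R ({x2} ×ˢ (univ : Set ℝ)) = 0
    · have : R {(x2, y1)} = 0 := le_antisymm (h2 ▸ hsub x2 y1) zero_le
      simp [this]
    obtain ⟨μ, g1, g2, hσ, ⟨hm1, hd1⟩, ⟨hm2, hd2⟩, hmono⟩ :=
      hlr x1 x2 hx (pos_iff_ne_zero.2 h1) (pos_iff_ne_zero.2 h2)
    set c1 := R ({x1} ×ˢ (univ : Set ℝ)) with hc1def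
    set c2 := R ({x2} ×ˢ (univ : Set ℝ)) with hc2def
    have hc1t : c1 ≠ ∞ := measure_ne_top R _
    have hc2t : c2 ≠ ∞ := measure_ne_top R _
    have key1 : ∀ y : ℝ, g1 y * μ {y} = c1⁻¹ * R {(x1, y)} := fun y => by
      rw [← condDist_singleton, hd1 {y} (measurableSet_singleton y), lintegral_singleton]
    have key2 : ∀ y : ℝ, g2 y * μ {y} = c2⁻¹ * R {(x2, y)} := fun y => by
      rw [← condDist_singleton, hd2 {y} (measurableSet_singleton y), lintegral_singleton]
    have hrec : ∀ (c : ℝ≥0∞) (v : ℝ≥0∞), c ≠ 0 → c ≠ ∞ → c * (c⁻¹ * v) = v := by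
      intro c v hc hct
      rw [← mul_assoc, ENNReal.mul_inv_cancel hc hct, one_mul]
    -- rewrite goal in terms of the Q-values
    have hA11 : R {(x1, y1)} = c1 * (g1 y1 * μ {y1}) := by rw [key1, hrec c1 _ h1 hc1t]
    have hA12 : R {(x1, y2)} = c1 * (g1 y2 * μ {y2}) := by rw [key1, hrec c1 _ h1 hc1t]
    have hA21 : R {(x2, y1)} = c2 * (g2 y1 * μ {y1}) := by rw [key2, hrec c2 _ h2 hc2t]
    have hA22 : R {(x2, y2)} = c2 * (g2 y2 * μ {y2}) := by rw [key2, hrec c2 _ h2 hc2t]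
    rw [hA11, hA12, hA21, hA22]
    have main : (g2 y1 * μ {y1}) * (g1 y2 * μ {y2}) ≤ (g1 y1 * μ {y1}) * (g2 y2 * μ {y2}) := by
      by_cases hm1' : μ {y1} = 0
      · simp [hm1']
      by_cases hm2' : μ {y2} = 0
      · simp [hm2']
      by_cases hz1 : g1 y1 = 0 ∧ g2 y1 = 0
      · simp [hz1.2]
      by_cases hz2 : g1 y2 = 0 ∧ g2 y2 = 0
      · simp [hz2.1]
      have hpos1 : 0 < g1 y1 + g2 y1 := by
        rcases (not_and_or.1 hz1) with h | h <;>
          simpa [pos_iff_ne_zero] using fun h11 h12 => h (by assumption)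
      have hpos2 : 0 < g1 y2 + g2 y2 := by
        rcases (not_and_or.1 hz2) with h | h <;>
          simpa [pos_iff_ne_zero] using fun h11 h12 => h (by assumption)
      have hmono' := hmono y1 y2 hy.le hpos1 hpos2
      -- finiteness of the g's
      have hfin : ∀ (g : ℝ → ℝ≥0∞) (c : ℝ≥0∞) (y : ℝ), c ≠ 0 → μ {y} ≠ 0 →
          (∀ z : ℝ, g z * μ {z} = c⁻¹ * R {(x1, z)} ∨ g z * μ {z} = c⁻¹ * R {(x2, z)}) →
          g y ≠ ∞ := by
        intro g c y hc hmy hkey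
        intro htop
        have : g y * μ {y} = ∞ := by rw [htop]; exact ENNReal.top_mul hmy
        rcases hkey y with h | h <;>
        · rw [h] at this
          exact (ENNReal.mul_ne_top (ENNReal.inv_ne_top.2 hc) (measure_ne_top R _)) this
      have hb : g1 y1 ≠ ∞ := hfin g1 c1 y1 h1 hm1' (fun z => Or.inl (key1 z))
      have hd : g1 y2 ≠ ∞ := hfin g1 c1 y2 h1 hm2' (fun z => Or.inl (key1 z))
      have hcc : g2 y2 ≠ ∞ := hfin g2 c2 y2 h2 hm2' (fun z => Or.inr (key2 z))
      have hab : g1 y1 = 0 → g2 y1 ≠ 0 := by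
        intro hb0
        rcases (not_and_or.1 hz1) with h | h
        · exact absurd hb0 h
        · exact h
      have core : g2 y1 * g1 y2 ≤ g2 y2 * g1 y1 :=
        mul_le_of_div_le_div' hb hd hcc hab hmono'
      calc (g2 y1 * μ {y1}) * (g1 y2 * μ {y2})
          = (g2 y1 * g1 y2) * (μ {y1} * μ {y2}) := by ring
        _ ≤ (g2 y2 * g1 y1) * (μ {y1} * μ {y2}) := mul_le_mul_left core _
        _ = (g1 y1 * μ {y1}) * (g2 y2 * μ {y2}) := by ring
    calc c2 * (g2 y1 * μ {y1}) * (c1 * (g1 y2 * μ {y2}))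
        = (c1 * c2) * ((g2 y1 * μ {y1}) * (g1 y2 * μ {y2})) := by ring
      _ ≤ (c1 * c2) * ((g1 y1 * μ {y1}) * (g2 y2 * μ {y2})) := mul_le_mul_right main _
      _ = c1 * (g1 y1 * μ {y1}) * (c2 * (g2 y2 * μ {y2})) := by ring
  · -- TP2 implies LR order
    intro htp x1 x2 hx hc1 hc2
    set c1 := R ({x1} ×ˢ (univ : Set ℝ)) with hc1def
    set c2 := R ({x2} ×ˢ (univ : Set ℝ)) with hc2def
    have hc1' : c1 ≠ 0 := hc1.ne'
    have hc2' : c2 ≠ 0 := hc2.ne'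
    have hc1t : c1 ≠ ∞ := measure_ne_top R _
    have hc2t : c2 ≠ ∞ := measure_ne_top R _
    set Q1 := condDist R x1 with hQ1def
    set Q2 := condDist R x2 with hQ2def
    have hQuniv : ∀ (x : ℝ), R ({x} ×ˢ (univ : Set ℝ)) ≠ 0 →
        condDist R x univ = 1 := by
      intro x hx0
      rw [condDist_apply R x MeasurableSet.univ, ENNReal.inv_mul_cancel hx0 (measure_ne_top R _)]
    have hQT : ∀ x : ℝ, condDist R x Tᶜ = 0 := by
      intro x
      rw [condDist_apply R x hT.measurableSet.compl]
      have : R ({x} ×ˢ Tᶜ) = 0 := by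
        refine measure_mono_null ?_ hRS
        rintro ⟨a, b⟩ ⟨ha, hb⟩ hmem
        exact hb ⟨(a, b), hmem, rfl⟩
      rw [this, mul_zero]
    set μ := Q1 + Q2 with hμdef
    have hμs : ∀ B : Set ℝ, μ B = Q1 B + Q2 B := fun B => rfl
    have hμfin : IsFiniteMeasure μ := by
      constructor
      rw [hμs, hQ1def, hQ2def, hQuniv x1 hc1', hQuniv x2 hc2']
      exact ENNReal.add_lt_top.2 ⟨ENNReal.one_lt_top, ENNReal.one_lt_top⟩
    haveI := hμfin
    have hle1 : ∀ y : ℝ, Q1 {y} ≤ μ {y} := fun y => by rw [hμs]; exact le_self_add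
    have hle2 : ∀ y : ℝ, Q2 {y} ≤ μ {y} := fun y => by rw [hμs]; exact le_add_self
    have hμT : ∀ y : ℝ, μ {y} ≠ ∞ := fun y => measure_ne_top μ _
    refine ⟨μ, fun y => Q1 {y} / μ {y}, fun y => Q2 {y} / μ {y}, inferInstance,
      isDensity_div Q1 μ hT (hQT x1) hle1 hμT,
      isDensity_div Q2 μ hT (hQT x2) hle2 hμT, ?_⟩
    intro y y' hyy' hpos hpos'
    have hmz : ∀ z : ℝ, (0 : ℝ≥0∞) < Q1 {z} / μ {z} + Q2 {z} / μ {z} → μ {z} ≠ 0 := by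
      intro z hp hz
      have e1 : Q1 {z} = 0 := le_antisymm (hz ▸ hle1 z) zero_le
      have e2 : Q2 {z} = 0 := le_antisymm (hz ▸ hle2 z) zero_le
      rw [e1, e2] at hp
      simp at hp
    have hm0 : μ {y} ≠ 0 := hmz y hpos
    have hm0' : μ {y'} ≠ 0 := hmz y' hpos'
    simp only []
    rw [div_div_div_cancel' (μ {y}) hm0 (hμT y), div_div_div_cancel' (μ {y'}) hm0' (hμT y')]
    -- now the core: Q2{y}/Q1{y} ≤ Q2{y'}/Q1{y'}
    have hQ1fin : ∀ z : ℝ, Q1 {z} ≠ ∞ := fun z => ne_top_of_le_ne_top (hμT z) (hle1 z)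
    have hQ2fin : ∀ z : ℝ, Q2 {z} ≠ ∞ := fun z => ne_top_of_le_ne_top (hμT z) (hle2 z)
    have hne : Q1 {y'} = 0 → Q2 {y'} ≠ 0 := by
      intro h0 h0'
      have hp : (0 : ℝ≥0∞) < Q1 {y'} / μ {y'} + Q2 {y'} / μ {y'} := hpos'
      rw [h0, h0'] at hp
      simp at hp
    rcases eq_or_lt_of_le hyy' with rfl | hlt
    · exact le_refl _
    refine div_le_div_of_mul_le' (hQ1fin y) (hQ1fin y') (hQ2fin y') hne ?_
    -- Q2{y} * Q1{y'} ≤ Q2{y'} * Q1{y}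
    have e1 : ∀ z : ℝ, Q1 {z} = c1⁻¹ * R {(x1, z)} := fun z => condDist_singleton R x1 z
    have e2 : ∀ z : ℝ, Q2 {z} = c2⁻¹ * R {(x2, z)} := fun z => condDist_singleton R x2 z
    have htp' := htp x1 x2 y y' hx hlt
    calc Q2 {y} * Q1 {y'} = (c1⁻¹ * c2⁻¹) * (R {(x2, y)} * R {(x1, y')}) := by
          rw [e1, e2]; ring
      _ ≤ (c1⁻¹ * c2⁻¹) * (R {(x1, y)} * R {(x2, y')}) := mul_le_mul_right htp' _
      _ = Q2 {y'} * Q1 {y} := by rw [e1, e2]; ring
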